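/- Let L/K be a differential field extension of fields of characteristic p > 0. Then the following are equivalent: (1) L/K is a separable field extension; (2) the field of constants C_K and L^p are linearly disjoint over K^p. -/
import Mathlib


set_option synthInstance.maxHeartbeats 1000000
set_option maxHeartbeats 1000000

section Aux

variable {M : Type*} [Field M]

private lemma iter_sum_const {m : ℕ} (d : Derivation ℤ M M) (b y : Fin m → M)
    (hb : ∀ j, d (b j) = 0) (i : ℕ) :
    d^[i] (∑ j, b j * y j) = ∑ j, b j * d^[i] (y j) := by
  induction i with
  | zero => simp
  | succ i ih =>
    rw [Function.iterate_succ_apply', ih, map_sum]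
    refine Finset.sum_congr rfl fun j _ => ?_
    rw [Derivation.leibniz, hb j, Function.iterate_succ_apply']
    simp [mul_comm]

private lemma exists_const_rel (d : Derivation ℤ M M) :
    ∀ (m : ℕ) (y : Fin m → M),
      (Matrix.of fun i j : Fin m => d^[(i : ℕ)] (y j)).det = 0 →
      ∃ c : Fin m → M, (∀ j, d (c j) = 0) ∧ (∑ j, c j * y j = 0) ∧ c ≠ 0 := by
  intro m
  induction m with
  | zero => intro y hy; simp [Matrix.det_fin_zero] at hy
  | succ m ih =>
    intro y hdet
    by_cases hA' : (Matrix.of fun i j : Fin m => d^[(i : ℕ)] ((y ∘ Fin.castSucc) j)).det = 0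
    · obtain ⟨c, hc, hsum, hne⟩ := ih (y ∘ Fin.castSucc) hA'
      refine ⟨Fin.snoc c 0, ?_, ?_, ?_⟩
      · intro j
        refine Fin.lastCases ?_ (fun j => ?_) j
        · simp
        · simp [hc j]
      · rw [Fin.sum_univ_castSucc]
        simpa using hsum
      · obtain ⟨j, hj⟩ := Function.ne_iff.mp hne
        refine Function.ne_iff.mpr ⟨j.castSucc, by simpa using hj⟩
    · obtain ⟨a, ha0, hav⟩ := (Matrix.exists_mulVec_eq_zero_iff).mpr hdet
      have hrel : ∀ i : Fin (m+1), ∑ j, a j * d^[(i : ℕ)] (y j) = 0 := fun i => by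
        have := congrFun hav i
        simpa [Matrix.mulVec, dotProduct, mul_comm] using this
      have hlast : a (Fin.last m) ≠ 0 := by
        intro h0
        apply hA'
        rw [← Matrix.exists_mulVec_eq_zero_iff]
        refine ⟨a ∘ Fin.castSucc, ?_, ?_⟩
        · obtain ⟨j, hj⟩ := Function.ne_iff.mp ha0
          have hjne : j ≠ Fin.last m := fun h => hj (h ▸ h0)
          obtain ⟨k, rfl⟩ := Fin.exists_castSucc_eq.mpr hjne
          exact Function.ne_iff.mpr ⟨k, hj⟩
        · funext i
          have := hrel i.castSucc
          rw [Fin.sum_univ_castSucc] at this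
          simp only [h0, zero_mul, mul_zero, add_zero] at this
          simpa [Matrix.mulVec, dotProduct, mul_comm] using this
      set b : Fin (m+1) → M := fun j => a j / a (Fin.last m) with hbdef
      have hrelb : ∀ i : Fin (m+1), ∑ j, b j * d^[(i : ℕ)] (y j) = 0 := fun i => by
        simp only [hbdef, div_mul_eq_mul_div, ← Finset.sum_div]
        rw [hrel i, zero_div]
      have hblast : b (Fin.last m) = 1 := div_self hlast
      have hder : ∀ i : Fin m, ∑ j, d (b j) * d^[(i : ℕ)] (y j) = 0 := by
        intro i
        have h1 := congrArg d (hrelb i.castSucc)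
        rw [map_sum, map_zero] at h1
        simp only [Derivation.leibniz, smul_eq_mul] at h1
        rw [Finset.sum_add_distrib] at h1
        have h2 : ∑ j, b j * d (d^[(i.castSucc : ℕ)] (y j)) = 0 := by
          have := hrelb i.succ
          simp only [Fin.val_succ, Fin.coe_castSucc] at *
          simpa [← Function.iterate_succ_apply' d] using this
        rw [h2, zero_add] at h1
        simpa [mul_comm] using h1
      have hdb : ∀ j : Fin m, d (b j.castSucc) = 0 := by
        by_contra hne
        push_neg at hne
        apply hA'
        rw [← Matrix.exists_mulVec_eq_zero_iff]
        obtain ⟨k, hk⟩ := hne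
        refine ⟨fun j => d (b j.castSucc), Function.ne_iff.mpr ⟨k, hk⟩, ?_⟩
        funext i
        have := hder i
        rw [Fin.sum_univ_castSucc, hblast] at this
        simp only [Derivation.map_one_eq_zero, zero_mul, add_zero] at this
        simpa [Matrix.mulVec, dotProduct, mul_comm] using this
      refine ⟨b, ?_, ?_, ?_⟩
      · intro j
        refine Fin.lastCases ?_ hdb j
        rw [hblast]; exact Derivation.map_one_eq_zero d
      · have := hrelb 0
        simpa using this
      · intro h
        have := congrFun h (Fin.last m)
        rw [hblast] at this
        exact one_ne_zero this

private lemma det_eq_zero_of_const_rel {m : ℕ} (d : Derivation ℤ M M) (y b : Fin m → M)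
    (hb : ∀ j, d (b j) = 0) (hsum : ∑ j, b j * y j = 0) (hne : b ≠ 0) :
    (Matrix.of fun i j : Fin m => d^[(i : ℕ)] (y j)).det = 0 := by
  rw [← Matrix.exists_mulVec_eq_zero_iff]
  refine ⟨b, hne, ?_⟩
  funext i
  have h := iter_sum_const d b y hb (i : ℕ)
  rw [hsum, Function.iterate_fixed (map_zero d) (i : ℕ)] at h
  simpa [Matrix.mulVec, dotProduct, mul_comm] using h.symm

variable {K L : Type*} [Field K] [Field L] [Algebra K L]

private lemma iter_algebraMap (δ : Derivation ℤ K K) (δL : Derivation ℤ L L)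
    (hcomp : ∀ a, δL (algebraMap K L a) = algebraMap K L (δ a)) (i : ℕ) (a : K) :
    δL^[i] (algebraMap K L a) = algebraMap K L (δ^[i] a) := by
  induction i generalizing a with
  | zero => simp
  | succ i ih =>
    rw [Function.iterate_succ_apply, Function.iterate_succ_apply, hcomp, ih]

private lemma const_extend {m : ℕ} (δ : Derivation ℤ K K) (δL : Derivation ℤ L L)
    (hcomp : ∀ a, δL (algebraMap K L a) = algebraMap K L (δ a)) (y : Fin m → K)
    (hind : ∀ c : Fin m → K, (∀ j, δ (c j) = 0) → ∑ j, c j * y j = 0 → ∀ j, c j = 0)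
    (b : Fin m → L) (hb : ∀ j, δL (b j) = 0) (hsum : ∑ j, b j * algebraMap K L (y j) = 0) :
    ∀ j, b j = 0 := by
  by_contra hne
  push_neg at hne
  obtain ⟨j0, hj0⟩ := hne
  have hbne : b ≠ 0 := Function.ne_iff.mpr ⟨j0, hj0⟩
  have hdetL := det_eq_zero_of_const_rel δL (fun j => algebraMap K L (y j)) b hb hsum hbne
  have heq : (Matrix.of fun i j : Fin m => δL^[(i : ℕ)] (algebraMap K L (y j)))
      = (Matrix.of fun i j : Fin m => δ^[(i : ℕ)] (y j)).map (algebraMap K L) := by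
    ext i j
    simp [iter_algebraMap δ δL hcomp]
  rw [heq] at hdetL
  rw [show ((Matrix.of fun i j : Fin m => δ^[(i : ℕ)] (y j)).map (algebraMap K L)).det
      = algebraMap K L (Matrix.of fun i j : Fin m => δ^[(i : ℕ)] (y j)).det from
    (RingHom.map_det (algebraMap K L) _).symm] at hdetL
  have hdetK : (Matrix.of fun i j : Fin m => δ^[(i : ℕ)] (y j)).det = 0 :=
    (map_eq_zero_iff _ (algebraMap K L).injective).mp hdetL
  obtain ⟨c, hc, hcsum, hcne⟩ := exists_const_rel δ m y hdetK
  exact hcne (funext (hind c hc hcsum))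

private lemma base_change {ι κ : Type*} [Fintype ι] [Fintype κ]
    (g : ι → κ → K) (β : ι → L)
    (hg : ∀ μ : ι → K, (∀ s, ∑ i, μ i * g i s = 0) → ∀ i, μ i = 0)
    (hβ : ∀ s, ∑ i, β i * algebraMap K L (g i s) = 0) : ∀ i, β i = 0 := by
  let bs := Module.Basis.ofVectorSpace K L
  have h0 : ∀ s, ∑ i, g i s • β i = 0 := fun s => by
    rw [← hβ s]
    exact Finset.sum_congr rfl fun i _ => by rw [Algebra.smul_def, mul_comm]
  have h1 : ∀ s k, ∑ i, g i s * bs.repr (β i) k = 0 := fun s k => by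
    have := congrArg (fun x => bs.repr x k) (h0 s)
    simpa [map_sum, Finset.sum_apply'] using this
  intro i
  have h2 : bs.repr (β i) = 0 :=
    Finsupp.ext fun k =>
      hg (fun i => bs.repr (β i) k) (fun s => by simpa [mul_comm] using h1 s k) i
  simpa using congrArg bs.repr.symm h2

private def constSubfield {K : Type*} [Field K] (δ : Derivation ℤ K K) : Subfield K where
  carrier := {a | δ a = 0}
  mul_mem' := by
    intro a b ha hb
    simp only [Set.mem_setOf_eq] at *
    rw [Derivation.leibniz, ha, hb]
    simp
  one_mem' := by simp
  add_mem' := by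
    intro a b ha hb
    simp only [Set.mem_setOf_eq] at *
    rw [map_add, ha, hb, add_zero]
  zero_mem' := by simp
  neg_mem' := by
    intro a ha
    simp only [Set.mem_setOf_eq] at *
    rw [map_neg, ha, neg_zero]
  inv_mem' := by
    intro a ha
    simp only [Set.mem_setOf_eq] at *
    rw [Derivation.leibniz_inv, ha]
    simp

private lemma mem_constSubfield {K : Type*} [Field K] (δ : Derivation ℤ K K) (a : K) :
    a ∈ constSubfield δ ↔ δ a = 0 := Iff.rfl

end Aux

/-- For a differential field extension `L/K` of characteristic `p > 0`, the following are
equivalent: (1) `L/K` is separable, i.e. `K` and `L^p` are linearly disjoint over `K^p`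
(every `K^p`-linearly independent family in `K` stays `L^p`-linearly independent in `L`);
(2) `C_K` and `L^p` are linearly disjoint over `K^p` (the same statement restricted to
families of constants of `K`). -/
theorem stmt14 {K L : Type*} [Field K] [Field L] [Algebra K L]
    (p : ℕ) [Fact p.Prime] [CharP K p] [CharP L p]
    (δ : Derivation ℤ K K) (δL : Derivation ℤ L L)
    (hcomp : ∀ a : K, δL (algebraMap K L a) = algebraMap K L (δ a)) :
    (∀ (n : ℕ) (v : Fin n → K),
        LinearIndependent ((frobenius K p).fieldRange) v →
        LinearIndependent ((frobenius L p).fieldRange) fun i => algebraMap K L (v i)) ↔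
    (∀ (n : ℕ) (v : Fin n → K), (∀ i, δ (v i) = 0) →
        LinearIndependent ((frobenius K p).fieldRange) v →
        LinearIndependent ((frobenius L p).fieldRange) fun i => algebraMap K L (v i)) := by
  classical
  constructor
  · intro h n v _ hv
    exact h n v hv
  · intro h n x hx
    have hpne : p ≠ 0 := (Fact.out : p.Prime).ne_zero
    set f := algebraMap K L with hf
    -- coefficient form of K^p-linear independence of x
    have hxco : ∀ μ : Fin n → K, (∑ i, μ i ^ p * x i = 0) → ∀ i, μ i = 0 := by
      intro μ hμ i
      have h1 := Fintype.linearIndependent_iff.mp hx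
        (fun i => (⟨μ i ^ p, ⟨μ i, rfl⟩⟩ : (frobenius K p).fieldRange)) ?_ i
      · have h2 := congrArg Subtype.val h1
        exact pow_eq_zero_iff hpne |>.mp h2
      · rw [← hμ]
        exact Finset.sum_congr rfl fun i _ => by rw [Subfield.smul_def, smul_eq_mul]
    rw [Fintype.linearIndependent_iff]
    intro gco hgsum
    simp only [Subfield.smul_def, smul_eq_mul] at hgsum
    set b : Fin n → L := fun i => (gco i : L) with hb
    choose β hβ using fun i => (gco i).2
    have hbp : ∀ i, β i ^ p = b i := fun i => hβ i
    have hsum : ∑ i, b i * f (x i) = 0 := hgsum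
    -- extract a C_K-basis y of the C_K-span of the x's
    set CK := constSubfield δ with hCK
    obtain ⟨t, htsub, htspan, htind⟩ := exists_linearIndependent CK (Set.range x)
    have htfin : t.Finite := (Set.finite_range x).subset htsub
    haveI := htfin.fintype
    set m := Fintype.card t with hm
    set em := Fintype.equivFin t with hem
    set y : Fin m → K := fun j => ((em.symm j : t) : K) with hy
    have hrange : Set.range y = t := by
      have hcomp2 : y = (fun (u : t) => (u : K)) ∘ em.symm := rfl
      rw [hcomp2, Set.range_comp, Equiv.range_eq_univ, Set.image_univ, Subtype.range_coe]
    have hyind : LinearIndependent CK y := htind.comp em.symm em.symm.injective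
    have hyco : ∀ c : Fin m → K, (∀ j, δ (c j) = 0) → ∑ j, c j * y j = 0 → ∀ j, c j = 0 := by
      intro c hcj hcs j
      have h1 := Fintype.linearIndependent_iff.mp hyind
        (fun j => (⟨c j, (mem_constSubfield δ (c j)).mpr (hcj j)⟩ : CK)) ?_ j
      · exact congrArg Subtype.val h1
      · exact (Finset.sum_congr rfl fun j _ => by
          rw [Subfield.smul_def, smul_eq_mul]).trans hcs
    have hxspan : ∀ i, x i ∈ Submodule.span CK (Set.range y) := by
      intro i
      rw [hrange, htspan]
      exact Submodule.subset_span (Set.mem_range_self i)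
    choose cc hcc using fun i => (Submodule.mem_span_range_iff_exists_fun CK).mp (hxspan i)
    set c : Fin n → Fin m → K := fun i j => (cc i j : K) with hc
    have hcconst : ∀ i j, δ (c i j) = 0 := fun i j => (mem_constSubfield δ _).mp (cc i j).2
    have hxc : ∀ i, ∑ j, c i j * y j = x i := by
      intro i
      rw [← hcc i]
      exact Finset.sum_congr rfl fun j _ => by rw [Subfield.smul_def, smul_eq_mul]
    -- the coefficients B j vanish
    have hδLb : ∀ i, δL (b i) = 0 := by
      intro i
      rw [← hbp i, Derivation.leibniz_pow]
      simp [CharP.cast_eq_zero L p]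
    have hδLc : ∀ i j, δL (f (c i j)) = 0 := by
      intro i j
      rw [hcomp, hcconst i j, map_zero]
    have hB : ∀ j, ∑ i, b i * f (c i j) = 0 := by
      apply const_extend δ δL hcomp y hyco
      · intro j
        rw [map_sum]
        refine Finset.sum_eq_zero fun i _ => ?_
        rw [Derivation.leibniz, hδLc i j, hδLb i]
        simp
      · have hswap : ∑ j, (∑ i, b i * f (c i j)) * f (y j) = ∑ i, b i * f (x i) := by
          simp_rw [Finset.sum_mul]
          rw [Finset.sum_comm]
          refine Finset.sum_congr rfl fun i _ => ?_
          rw [← hxc i, map_sum, Finset.mul_sum]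
          refine Finset.sum_congr rfl fun j _ => ?_
          rw [map_mul, mul_assoc]
        rw [hswap, hsum]
    -- extract a K^p-basis e of the K^p-span of the c's
    set Kp := (frobenius K p).fieldRange with hKp
    obtain ⟨t2, ht2sub, ht2span, ht2ind⟩ :=
      exists_linearIndependent Kp (Set.range fun q : Fin n × Fin m => c q.1 q.2)
    have ht2fin : t2.Finite := (Set.finite_range _).subset ht2sub
    haveI := ht2fin.fintype
    set s := Fintype.card t2 with hs
    set e2 := Fintype.equivFin t2 with he2
    set e : Fin s → K := fun u => ((e2.symm u : t2) : K) with he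
    have hrange2 : Set.range e = t2 := by
      have hcomp2 : e = (fun (u : t2) => (u : K)) ∘ e2.symm := rfl
      rw [hcomp2, Set.range_comp, Equiv.range_eq_univ, Set.image_univ, Subtype.range_coe]
    have heconst : ∀ u, δ (e u) = 0 := by
      intro u
      obtain ⟨q, hq⟩ := ht2sub (e2.symm u).2
      have heu : e u = c q.1 q.2 := hq.symm
      rw [heu]
      exact hcconst q.1 q.2
    have heind : LinearIndependent Kp e := ht2ind.comp e2.symm e2.symm.injective
    have hLe := h s e heconst heind
    have hcspan : ∀ i j, c i j ∈ Submodule.span Kp (Set.range e) := by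
      intro i j
      rw [hrange2, ht2span]
      exact Submodule.subset_span ⟨(i, j), rfl⟩
    choose F hF using fun i j => (Submodule.mem_span_range_iff_exists_fun Kp).mp (hcspan i j)
    choose g hg using fun i j u => (F i j u).2
    have hgp : ∀ i j u, g i j u ^ p = (F i j u : K) := fun i j u => hg i j u
    have hcF : ∀ i j, ∑ u, g i j u ^ p * e u = c i j := by
      intro i j
      rw [← hF i j]
      refine Finset.sum_congr rfl fun u _ => ?_
      rw [Subfield.smul_def, smul_eq_mul, hgp]
    -- conclude the relations ∑ i, β i * f (g i j u) = 0
    have hG : ∀ (j : Fin m) (u : Fin s), ∑ i, β i * f (g i j u) = 0 := by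
      intro j u
      have h6 : ∑ u, ((∑ i, β i * f (g i j u)) ^ p) * f (e u) = 0 := by
        have hexp : ∀ u : Fin s,
            ((∑ i, β i * f (g i j u)) ^ p) * f (e u) = ∑ i, b i * (f (g i j u ^ p) * f (e u)) := by
          intro u
          rw [sum_pow_char p, Finset.sum_mul]
          refine Finset.sum_congr rfl fun i _ => ?_
          rw [mul_pow, hbp i, map_pow, mul_assoc]
        rw [Finset.sum_congr rfl fun u _ => hexp u, Finset.sum_comm]
        rw [← hB j]
        refine Finset.sum_congr rfl fun i _ => ?_
        rw [← Finset.mul_sum, ← hcF i j, map_sum]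
        congr 1
        refine Finset.sum_congr rfl fun u _ => ?_
        rw [map_mul]
      have h7 := Fintype.linearIndependent_iff.mp hLe
        (fun u => (⟨(∑ i, β i * f (g i j u)) ^ p, ⟨∑ i, β i * f (g i j u), rfl⟩⟩ :
          (frobenius L p).fieldRange)) ?_ u
      · have h8 := congrArg Subtype.val h7
        exact pow_eq_zero_iff hpne |>.mp h8
      · rw [← h6]
        exact Finset.sum_congr rfl fun u _ => by rw [Subfield.smul_def, smul_eq_mul]
    -- linear independence of the g's over K
    have hgind : ∀ μ : Fin n → K, (∀ q : Fin m × Fin s, ∑ i, μ i * g i q.1 q.2 = 0) →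
        ∀ i, μ i = 0 := by
      intro μ hμ
      apply hxco
      have hstep1 : ∀ j u, ∑ i, μ i ^ p * g i j u ^ p = 0 := by
        intro j u
        have := congrArg (fun z => z ^ p) (hμ (j, u))
        simpa [sum_pow_char p, mul_pow, zero_pow hpne] using this
      have hstep2 : ∀ j, ∑ i, μ i ^ p * c i j = 0 := by
        intro j
        have heq2 : ∑ u, (∑ i, μ i ^ p * g i j u ^ p) * e u = ∑ i, μ i ^ p * c i j := by
          simp_rw [Finset.sum_mul]
          rw [Finset.sum_comm]
          refine Finset.sum_congr rfl fun i _ => ?_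
          rw [← hcF i j, Finset.mul_sum]
          exact Finset.sum_congr rfl fun u _ => by ring
        rw [← heq2]
        simp [hstep1]
      have heq3 : ∑ j, (∑ i, μ i ^ p * c i j) * y j = ∑ i, μ i ^ p * x i := by
        simp_rw [Finset.sum_mul]
        rw [Finset.sum_comm]
        refine Finset.sum_congr rfl fun i _ => ?_
        rw [← hxc i, Finset.mul_sum]
        exact Finset.sum_congr rfl fun j _ => by ring
      rw [← heq3]
      simp [hstep2]
    have hβ0 := base_change (fun i (q : Fin m × Fin s) => g i q.1 q.2) β hgind
      (fun q => hG q.1 q.2)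
    intro i
    apply Subtype.ext
    show (gco i : L) = 0
    rw [← hβ i, hβ0 i, map_zero]
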